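/- Let K be a valued field, let B₁, B₂ ⊆ K be balls, and let f : B₁ → B₂ satisfy |f(x) − f(x')| < |x − x'| for all distinct x, x' ∈ B₁. Fix y₀ ∈ B₂ and set B := B₁ × B₂. Then the map φ : B → B defined by φ(x, y) = (x, y − y₀ + f(x)) is a well-defined risometry of B, and φ maps the horizontal segment B₁ × {y₀} onto the graph of f. -/
import Mathlib


/-- A (valuative) ball in `K`: an infinite set such that together with any two
points `x, x'` it contains every `y` with `|x − y| ≤ |x − x'|`. -/
def IsBall1 {K Γ₀ : Type*} [Field K] [LinearOrderedCommGroupWithZero Γ₀]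
    (v : Valuation K Γ₀) (B : Set K) : Prop :=
  B.Infinite ∧ ∀ x ∈ B, ∀ x' ∈ B, ∀ y : K, v (x - y) ≤ v (x - x') → y ∈ B

/-- The sup-norm on `K²`. -/
noncomputable def supVal2 {K Γ₀ : Type*} [Field K] [LinearOrderedCommGroupWithZero Γ₀]
    (v : Valuation K Γ₀) (p : K × K) : Γ₀ :=
  max (v p.1) (v p.2)

/-- A risometry from `B` onto `B'` in `K²`. -/
def IsRisometryOn2 {K Γ₀ : Type*} [Field K] [LinearOrderedCommGroupWithZero Γ₀]
    (v : Valuation K Γ₀) (φ : K × K → K × K) (B B' : Set (K × K)) : Prop :=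
  Set.BijOn φ B B' ∧
    ∀ p ∈ B, ∀ q ∈ B, p ≠ q →
      supVal2 v (φ p - φ q - (p - q)) < supVal2 v (p - q)

/-- Balls are closed under `u + (w - s)` for `u, w, s` in the ball. -/
lemma ball_add_sub {K Γ₀ : Type*} [Field K] [LinearOrderedCommGroupWithZero Γ₀]
    {v : Valuation K Γ₀} {B : Set K} (hB : IsBall1 v B)
    {u w s : K} (hu : u ∈ B) (hw : w ∈ B) (hs : s ∈ B) : u + (w - s) ∈ B := by
  have e : v (u - (u + (w - s))) = v (s - w) := by ring_nf
  have hle : v (s - w) ≤ max (v (u - w)) (v (u - s)) := by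
    have : s - w = (u - w) - (u - s) := by ring
    rw [this]; exact v.map_sub _ _
  rcases le_total (v (u - s)) (v (u - w)) with h | h
  · exact hB.2 u hu w hw _ (by rw [e]; exact hle.trans (max_le le_rfl h))
  · exact hB.2 u hu s hs _ (by rw [e]; exact hle.trans (max_le h le_rfl))

/-- if `f : B₁ → B₂` satisfies `|f(x) − f(x')| < |x − x'|` on the ball `B₁`
and `y₀ ∈ B₂`, then `φ(x, y) = (x, y − y₀ + f(x))` is a well-defined risometry of
`B := B₁ × B₂`, mapping the horizontal segment `B₁ × {y₀}` onto the graph of `f`. -/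
theorem vertical_translation_risometry {K Γ₀ : Type*} [Field K]
    [LinearOrderedCommGroupWithZero Γ₀] (v : Valuation K Γ₀)
    (B₁ B₂ : Set K) (hB₁ : IsBall1 v B₁) (hB₂ : IsBall1 v B₂)
    (f : K → K) (hmap : ∀ x ∈ B₁, f x ∈ B₂)
    (hf : ∀ x ∈ B₁, ∀ x' ∈ B₁, x ≠ x' → v (f x - f x') < v (x - x'))
    (y₀ : K) (hy₀ : y₀ ∈ B₂) :
    IsRisometryOn2 v (fun p => (p.1, p.2 - y₀ + f p.1)) (B₁ ×ˢ B₂) (B₁ ×ˢ B₂) ∧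
      (fun p : K × K => (p.1, p.2 - y₀ + f p.1)) '' (B₁ ×ˢ ({y₀} : Set K)) =
        {p : K × K | p.1 ∈ B₁ ∧ p.2 = f p.1} := by
  constructor
  · constructor
    · refine ⟨?_, ?_, ?_⟩
      · rintro ⟨x, y⟩ ⟨hx, hy⟩
        refine ⟨hx, ?_⟩
        have : f x + (y - y₀) ∈ B₂ := ball_add_sub hB₂ (hmap x hx) hy hy₀
        simpa [add_comm, sub_add_eq_add_sub] using this
      · rintro ⟨x, y⟩ ⟨hx, hy⟩ ⟨x', y'⟩ ⟨hx', hy'⟩ h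
        simp only [Prod.mk.injEq] at h
        obtain ⟨h1, h2⟩ := h
        subst h1
        have : y = y' := by linear_combination h2
        simp [this]
      · rintro ⟨a, b⟩ ⟨ha, hb⟩
        exact ⟨(a, b + (y₀ - f a)), ⟨ha, ball_add_sub hB₂ hb hy₀ (hmap a ha)⟩,
          Prod.ext rfl (by ring)⟩
    · rintro ⟨x, y⟩ ⟨hx, hy⟩ ⟨x', y'⟩ ⟨hx', hy'⟩ hne
      simp only [Prod.mk_sub_mk, supVal2]
      have e1 : x - x' - (x - x') = (0 : K) := by ring
      have e2 : y - y₀ + f x - (y' - y₀ + f x') - (y - y') = f x - f x' := by ring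
      rw [e1, e2, map_zero]
      rcases eq_or_ne x x' with h | h
      · subst h
        have hy : y ≠ y' := fun hyy => hne (by simp [hyy])
        have : v (y - y') ≠ 0 := by
          simp only [ne_eq, Valuation.zero_iff, sub_eq_zero]; exact hy
        simp only [sub_self, map_zero, max_self]
        exact lt_of_lt_of_le (zero_lt_iff.mpr this) (le_max_right _ _)
      · calc max (0 : Γ₀) (v (f x - f x')) = v (f x - f x') := by simp
          _ < v (x - x') := hf x hx x' hx' h
          _ ≤ max (v (x - x')) (v (y - y')) := le_max_left _ _
  · ext ⟨a, b⟩
    simp only [Set.mem_image, Set.mem_prod, Set.mem_singleton_iff, Set.mem_setOf_eq,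
      Prod.mk.injEq, Prod.exists]
    constructor
    · rintro ⟨x, y, ⟨hx, rfl⟩, rfl, rfl⟩
      exact ⟨hx, by ring⟩
    · rintro ⟨ha, rfl⟩
      exact ⟨a, y₀, ⟨ha, rfl⟩, rfl, by ring⟩
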